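/- Let the chain block be built from the sequence z₁, ..., zₘ = MaxSeq(M, U, A) with chain order zᵢ ⪰ᶜ zⱼ iff i ≤ j. Then the chain is (iv)-safe: for every element z_k of the chain and every α ∈ A, if there exists u ≻ z_k in M with M, u ⊨ α, then there exists an earlier element zⱼ (j < k) of the chain with M, zⱼ ⊨ α. -/

import Mathlib

/-- Formulas of Åqvist's dyadic deontic language. -/
inductive PForm (V : Type) : Type
  | var : V → PForm V
  | neg : PForm V → PForm V
  | conj : PForm V → PForm V → PForm V
  | box : PForm V → PForm V
  | ob : PForm V → PForm V → PForm V   -- `ob γ α` is ◯(γ/α)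

/-- Strict version of a binary relation: `a ≻ b` iff `a ⪰ b` and `¬ b ⪰ a`. -/
def strictRel {W : Type} (r : W → W → Prop) (a b : W) : Prop := r a b ∧ ¬ r b a

/-- ≻-maximal elements of a set `U`. -/
def maxSet {W : Type} (r : W → W → Prop) (U : Set W) : Set W :=
  {v | v ∈ U ∧ ¬ ∃ u ∈ U, strictRel r u v}

/-- A preference model. -/
structure PrefModel (V : Type) : Type 1 where
  W : Type
  rel : W → W → Prop
  val : V → Set W

/-- Truth set of a formula in a preference model. -/
def truthSet {V : Type} (M : PrefModel V) : PForm V → Set M.W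
  | .var x => M.val x
  | .neg ψ => (truthSet M ψ)ᶜ
  | .conj ψ₁ ψ₂ => truthSet M ψ₁ ∩ truthSet M ψ₂
  | .box β => {_w | truthSet M β = Set.univ}
  | .ob γ α => {_w | maxSet M.rel (truthSet M α) ⊆ truthSet M γ}

/-- A model validates a formula when it is true at all worlds. -/
def valid {V : Type} (M : PrefModel V) (φ : PForm V) : Prop :=
  truthSet M φ = Set.univ

/-- Limitedness of a preference model. -/
def Limited {V : Type} (M : PrefModel V) : Prop :=
  ∀ α : PForm V, (truthSet M α).Nonempty → (maxSet M.rel (truthSet M α)).Nonempty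

/-- Smoothness of a preference model. -/
def SmoothModel {V : Type} (M : PrefModel V) : Prop :=
  ∀ (α : PForm V) (w : M.W), w ∈ truthSet M α →
    ∃ u ∈ maxSet M.rel (truthSet M α), u = w ∨ strictRel M.rel u w

/-- Subformulas of a formula (including the formula itself). -/
def Subf {V : Type} : PForm V → Set (PForm V)
  | .var x => {.var x}
  | .neg ψ => insert (.neg ψ) (Subf ψ)
  | .conj ψ₁ ψ₂ => insert (.conj ψ₁ ψ₂) (Subf ψ₁ ∪ Subf ψ₂)
  | .box β => insert (.box β) (Subf β)
  | .ob γ α => insert (.ob γ α) (Subf γ ∪ Subf α)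

open scoped Classical in
/-- The iterative selection of maximal worlds for disjunctions of remaining conditions. -/
noncomputable def maxSeq {V : Type} (M : PrefModel V) (rep : Set M.W → M.W)
    (hrep : ∀ S : Set M.W, S.Nonempty → rep S ∈ S)
    (U : Set M.W) (A : Finset (PForm V)) : List M.W :=
  if h : (U ∩ maxSet M.rel (⋃ α ∈ A, truthSet M α)).Nonempty then
    rep (U ∩ maxSet M.rel (⋃ α ∈ A, truthSet M α)) ::
      maxSeq M rep hrep U
        (A.filter fun α =>
          rep (U ∩ maxSet M.rel (⋃ α ∈ A, truthSet M α)) ∉ truthSet M α)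
  else []
termination_by A.card
decreasing_by
  have hz := hrep _ h
  have hz2 : rep (U ∩ maxSet M.rel (⋃ α ∈ A, truthSet M α)) ∈ ⋃ α ∈ A, truthSet M α :=
    hz.2.1
  simp only [Set.mem_iUnion] at hz2
  obtain ⟨α₀, hα₀A, hα₀⟩ := hz2
  exact Finset.card_lt_card
    (Finset.filter_ssubset.mpr ⟨α₀, hα₀A, by simp [hα₀]⟩)


open scoped Classical in
theorem stmt14aux {V : Type} (M : PrefModel V) (rep : Set M.W → M.W)
    (hrep : ∀ S : Set M.W, S.Nonempty → rep S ∈ S)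
    (U : Set M.W) (A : Finset (PForm V))
    (k : ℕ) (hk : k < (maxSeq M rep hrep U A).length)
    (α : PForm V) (hα : α ∈ A)
    (h : ∃ u : M.W, strictRel M.rel u ((maxSeq M rep hrep U A).get ⟨k, hk⟩) ∧
      u ∈ truthSet M α) :
    ∃ j : ℕ, ∃ hj : j < k,
      (maxSeq M rep hrep U A).get ⟨j, hj.trans hk⟩ ∈ truthSet M α := by
  by_cases hne : (U ∩ maxSet M.rel (⋃ α ∈ A, truthSet M α)).Nonempty
  · have heq : maxSeq M rep hrep U A =
        rep (U ∩ maxSet M.rel (⋃ α ∈ A, truthSet M α)) ::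
          maxSeq M rep hrep U (A.filter fun β =>
            rep (U ∩ maxSet M.rel (⋃ α ∈ A, truthSet M α)) ∉ truthSet M β) := by
      rw [maxSeq]; simp [hne]
    set z := rep (U ∩ maxSet M.rel (⋃ α ∈ A, truthSet M α)) with hzdef
    have hz := hrep _ hne
    match k, hk with
    | 0, hk =>
      exfalso
      obtain ⟨u, hu, huα⟩ := h
      have hget : (maxSeq M rep hrep U A).get ⟨0, hk⟩ = z := by
        rw [List.get_of_eq heq]; simp
      rw [hget] at hu
      have huU : u ∈ ⋃ α ∈ A, truthSet M α := Set.mem_biUnion hα huα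
      exact hz.2.2 ⟨u, huU, hu⟩
    | k' + 1, hk =>
      have hk' : k' < (maxSeq M rep hrep U (A.filter fun β => z ∉ truthSet M β)).length := by
        have := hk; rw [heq] at this; simpa using this
      have hget : (maxSeq M rep hrep U A).get ⟨k' + 1, hk⟩ =
          (maxSeq M rep hrep U (A.filter fun β => z ∉ truthSet M β)).get ⟨k', hk'⟩ := by
        rw [List.get_of_eq heq]
        simp
      by_cases hmem : α ∈ A.filter fun β => z ∉ truthSet M β
      · obtain ⟨j, hj, hjα⟩ := stmt14aux M rep hrep U _ k' hk' α hmem (by rw [hget] at h; exact h)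
        refine ⟨j + 1, Nat.succ_lt_succ hj, ?_⟩
        rw [List.get_of_eq heq]
        simpa using hjα
      · have hzα : z ∈ truthSet M α := by
          by_contra hc
          exact hmem (Finset.mem_filter.mpr ⟨hα, hc⟩)
        refine ⟨0, Nat.succ_pos _, ?_⟩
        rw [List.get_of_eq heq]
        simpa using hzα
  · exfalso
    have : maxSeq M rep hrep U A = [] := by rw [maxSeq]; simp [hne]
    rw [this] at hk; simp at hk
termination_by A.card
decreasing_by
  have hz2 : z ∈ ⋃ α ∈ A, truthSet M α := hz.2.1
  simp only [Set.mem_iUnion] at hz2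
  obtain ⟨α₀, hα₀A, hα₀⟩ := hz2
  exact Finset.card_lt_card (Finset.filter_ssubset.mpr ⟨α₀, hα₀A, by simpa [hzdef] using hα₀⟩)

/-- The chain built on `maxSeq` is (iv)-safe: if some `u ≻ z_k` satisfies `α ∈ A`, then
some earlier (more preferred) element of the chain satisfies `α`. -/
theorem stmt14 {V : Type} (M : PrefModel V) (rep : Set M.W → M.W)
    (hrep : ∀ S : Set M.W, S.Nonempty → rep S ∈ S)
    (U : Set M.W) (A : Finset (PForm V))
    (k : ℕ) (hk : k < (maxSeq M rep hrep U A).length)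
    (α : PForm V) (hα : α ∈ A)
    (h : ∃ u : M.W, strictRel M.rel u ((maxSeq M rep hrep U A).get ⟨k, hk⟩) ∧
      u ∈ truthSet M α) :
    ∃ j : ℕ, ∃ hj : j < k,
      (maxSeq M rep hrep U A).get ⟨j, hj.trans hk⟩ ∈ truthSet M α :=
  stmt14aux M rep hrep U A k hk α hα h
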